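/- (Lemma 2, Appell evaluation for κ-μ shadowed fading.) Let κ > 0, μ > 0, m > 0, h̄ > 0 with θ₁ = h̄/(μ(1+κ)) and θ₂ = (μκ+m)h̄/(μ(1+κ)m), let f be the κ-μ shadowed density, and let δ ∈ (0,1). Then for every z > 0, setting A = (1 − θ₁/θ₂)/(1 + θ₁ z) and B = θ₁ z/(1 + θ₁ z) (which satisfy A, B ≥ 0 and A + B < 1, so Appell's series converges), ∫₀^∞ (z x)^δ γ(1−δ, z x) f(x) dx = (μ θ₁ z/(1−δ)) · (θ₁/θ₂)^m · (1 + θ₁ z)^{−(μ+1)} · F₂(μ+1; m, 1; μ, 2−δ; A, B). -/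

import Mathlib

open Real MeasureTheory Set Filter

/-- Pochhammer symbol `(a)_n = Γ(a+n)/Γ(a)`. -/
noncomputable def poch (a : ℝ) : ℕ → ℝ
  | 0 => 1
  | n + 1 => poch a n * (a + n)

lemma poch_succ (a : ℝ) (n : ℕ) : poch a (n + 1) = poch a n * (a + n) := rfl

lemma poch_zero (a : ℝ) : poch a 0 = 1 := rfl

lemma poch_pos {a : ℝ} (ha : 0 < a) (n : ℕ) : 0 < poch a n := by
  induction n with
  | zero => norm_num [poch]
  | succ n ih => rw [poch_succ]; positivity

lemma poch_succ' (a : ℝ) (n : ℕ) : poch a (n + 1) = a * poch (a + 1) n := by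
  induction n with
  | zero => simp [poch]
  | succ n ih =>
      rw [poch_succ, ih, poch_succ]
      push_cast; ring

lemma poch_one_eq (n : ℕ) : poch 1 n = n.factorial := by
  induction n with
  | zero => simp [poch]
  | succ n ih => rw [poch_succ, ih, Nat.factorial_succ]; push_cast; ring

lemma poch_le_poch {a b : ℝ} (ha : 0 < a) (hab : a ≤ b) (n : ℕ) : poch a n ≤ poch b n := by
  induction n with
  | zero => simp [poch]
  | succ n ih =>
      rw [poch_succ, poch_succ]
      have h1 : (0:ℝ) ≤ a + n := by positivity
      exact mul_le_mul ih (by linarith) h1 ((poch_pos (lt_of_lt_of_le ha hab) n).le)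

lemma Gamma_poch {a : ℝ} (ha : 0 < a) (n : ℕ) :
    Real.Gamma (a + n) = poch a n * Real.Gamma a := by
  induction n with
  | zero => simp [poch]
  | succ n ih =>
      have h : a + (n + 1 : ℕ) = (a + n) + 1 := by push_cast; ring
      rw [h, Real.Gamma_add_one (by positivity), ih, poch_succ]; ring

lemma poch_add (a : ℝ) (p q : ℕ) : poch a (p + q) = poch a p * poch (a + p) q := by
  induction q with
  | zero => simp [poch]
  | succ q ih =>
      have h : p + (q + 1) = (p + q) + 1 := by ring
      rw [h, poch_succ, ih, poch_succ]
      push_cast; ring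

lemma factorial_le_poch {b : ℝ} (hb : 1 ≤ b) (n : ℕ) : (n.factorial : ℝ) ≤ poch b n := by
  rw [← poch_one_eq]
  exact poch_le_poch one_pos hb n

lemma s_factorial_le_poch {s : ℝ} (hs : 0 < s) (n : ℕ) :
    s * n.factorial ≤ poch s (n + 1) := by
  induction n with
  | zero => simp [poch]
  | succ n ih =>
      rw [poch_succ]
      calc s * ((n+1).factorial : ℝ) = (s * n.factorial) * (n+1) := by
            rw [Nat.factorial_succ]; push_cast; ring
        _ ≤ poch s (n+1) * (s + (n+1:ℕ)) := by
            apply mul_le_mul ih (by push_cast; linarith) (by positivity)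
              (poch_pos hs (n+1)).le

lemma poch_ratio_bound {m μ : ℝ} (hm : 0 < m) (hμ : 0 < μ) {ε : ℝ} (hε : 0 < ε) :
    ∃ D : ℝ, 0 < D ∧ ∀ p : ℕ, poch m p ≤ D * (1 + ε) ^ p * poch μ p := by
  set K := ⌈m / ε⌉₊ with hK
  set c : ℕ → ℝ := fun p => poch m p / ((1 + ε) ^ p * poch μ p) with hc
  have hcpos : ∀ p, 0 < c p := fun p =>
    div_pos (poch_pos hm p) (mul_pos (pow_pos (by linarith) p) (poch_pos hμ p))
  have hstep : ∀ p, K ≤ p → c (p + 1) ≤ c p := by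
    intro p hp
    have hKp : (m / ε : ℝ) ≤ p := le_trans (Nat.le_ceil _) (by exact_mod_cast hp)
    have hmp : m ≤ ε * p := by
      rw [div_le_iff₀ hε] at hKp; linarith [hKp]
    have key : m + p ≤ (1 + ε) * (μ + p) := by nlinarith [hμ, hε, (Nat.cast_nonneg p : (0:ℝ) ≤ p)]
    have h1 : c (p + 1) = c p * ((m + p) / ((1 + ε) * (μ + p))) := by
      rw [hc]; simp only []
      rw [poch_succ, poch_succ, pow_succ]
      field_simp
    rw [h1]
    have h2 : (m + p) / ((1 + ε) * (μ + p)) ≤ 1 := by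
      rw [div_le_one (by positivity)]; linarith
    nth_rewrite 2 [← mul_one (c p)]
    exact mul_le_mul_of_nonneg_left h2 (hcpos p).le
  have hmono : ∀ n, c (K + n) ≤ c K := by
    intro n
    induction n with
    | zero => simp
    | succ n ih => exact le_trans (hstep (K + n) (Nat.le_add_right _ _)) ih
  refine ⟨∑ j ∈ Finset.range (K + 1), c j, ?_, ?_⟩
  · exact Finset.sum_pos (fun j _ => hcpos j) (by simp)
  · intro p
    have hcle : c p ≤ ∑ j ∈ Finset.range (K + 1), c j := by
      rcases le_or_gt p K with h | h
      · exact Finset.single_le_sum (fun j _ => (hcpos j).le)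
          (Finset.mem_range.mpr (Nat.lt_succ_of_le h))
      · have : c p ≤ c K := by
          have := hmono (p - K)
          rwa [Nat.add_sub_cancel' h.le] at this
        exact le_trans this (Finset.single_le_sum (fun j _ => (hcpos j).le)
          (Finset.mem_range.mpr (Nat.lt_succ_of_le le_rfl)))
    have hne : ((1 + ε) ^ p * poch μ p) ≠ 0 :=
      (mul_pos (pow_pos (by linarith : (0:ℝ) < 1 + ε) p) (poch_pos hμ p)).ne'
    have hd : poch m p = c p * ((1 + ε) ^ p * poch μ p) := by
      rw [hc]; exact (div_mul_cancel₀ _ hne).symm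
    rw [hd, mul_assoc]
    exact mul_le_mul_of_nonneg_right hcle
      (mul_nonneg (pow_nonneg (by linarith) p) (poch_pos hμ p).le)

lemma summable_poch_inv {s x : ℝ} (hs : 0 < s) (hx : 0 ≤ x) :
    Summable (fun q : ℕ => x ^ q / poch s (q + 1)) := by
  refine Summable.of_nonneg_of_le (fun q => ?_) (fun q => ?_)
    ((Real.summable_pow_div_factorial x).mul_left s⁻¹)
  · exact div_nonneg (pow_nonneg hx q) (poch_pos hs (q+1)).le
  · rw [div_le_iff₀ (poch_pos hs (q+1)), mul_comm s⁻¹, mul_assoc]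
    have h1 : x ^ q / q.factorial * (s⁻¹ * (s * q.factorial)) ≤
        x ^ q / q.factorial * (s⁻¹ * poch s (q+1)) := by
      refine mul_le_mul_of_nonneg_left ?_ (by positivity)
      exact mul_le_mul_of_nonneg_left (s_factorial_le_poch hs q) (by positivity)
    calc x ^ q = x ^ q / q.factorial * (s⁻¹ * (s * q.factorial)) := by
          field_simp
      _ ≤ _ := h1

lemma summable_poch_mul_geom {a w : ℝ} (ha : 0 < a) (hw0 : 0 ≤ w) (hw1 : w < 1) :
    Summable (fun n : ℕ => poch a n / n.factorial * w ^ n) := by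
  set f : ℕ → ℝ := fun n => poch a n / n.factorial * w ^ n with hf
  have hfnn : ∀ n, 0 ≤ f n := fun n =>
    mul_nonneg (div_nonneg (poch_pos ha n).le (Nat.cast_nonneg _)) (pow_nonneg hw0 n)
  apply summable_of_ratio_norm_eventually_le (r := (1 + w) / 2) (by linarith)
  rw [Filter.eventually_atTop]
  refine ⟨⌈2 * a / (1 - w)⌉₊, fun n hn => ?_⟩
  have hcn : (2 * a / (1 - w) : ℝ) ≤ n := le_trans (Nat.le_ceil _) (by exact_mod_cast hn)
  have h1w : (0:ℝ) < 1 - w := by linarith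
  have hna : 2 * a ≤ n * (1 - w) := by
    rw [div_le_iff₀ h1w] at hcn; linarith
  have hstep : f (n + 1) = f n * ((a + n) * w / (n + 1)) := by
    rw [hf]; simp only [poch_succ, Nat.factorial_succ, pow_succ]
    push_cast
    field_simp
  rw [Real.norm_of_nonneg (hfnn _), Real.norm_of_nonneg (hfnn _), hstep]
  have hratio : (a + n) * w / (n + 1) ≤ (1 + w) / 2 := by
    rw [div_le_div_iff₀ (by positivity) (by norm_num)]
    nlinarith [hw0, hw1, ha, hna, (Nat.cast_nonneg n : (0:ℝ) ≤ n)]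
  calc f n * ((a + n) * w / (n + 1)) ≤ f n * ((1 + w) / 2) :=
        mul_le_mul_of_nonneg_left hratio (hfnn n)
    _ = (1 + w) / 2 * f n := by ring

lemma summable_F2coeff {μ m δ A B : ℝ} (hμ : 0 < μ) (hm : 0 < m) (hδ : δ < 1)
    (hA : 0 ≤ A) (hB : 0 ≤ B) (hAB : A + B < 1) :
    Summable (fun pq : ℕ × ℕ =>
      poch (μ + 1) (pq.1 + pq.2) * poch m pq.1 * poch 1 pq.2 /
        (poch μ pq.1 * poch (2 - δ) pq.2 * pq.1.factorial * pq.2.factorial) *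
        A ^ pq.1 * B ^ pq.2) := by
  set F : ℕ × ℕ → ℝ := fun pq =>
      poch (μ + 1) (pq.1 + pq.2) * poch m pq.1 * poch 1 pq.2 /
        (poch μ pq.1 * poch (2 - δ) pq.2 * pq.1.factorial * pq.2.factorial) *
        A ^ pq.1 * B ^ pq.2 with hF
  have hpos : ∀ a n, 0 < a → (0:ℝ) < poch a n := fun a n h => poch_pos h n
  have hFnn : ∀ pq, 0 ≤ F pq := by
    intro ⟨p, q⟩
    have h1 := poch_pos (by linarith : (0:ℝ) < μ + 1) (p + q)
    have h2 := poch_pos hm p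
    have h3 := poch_pos one_pos q
    have h4 := poch_pos hμ p
    have h5 := poch_pos (by linarith : (0:ℝ) < 2 - δ) q
    have h6 : (0:ℝ) < p.factorial := by exact_mod_cast p.factorial_pos
    have h7 : (0:ℝ) < q.factorial := by exact_mod_cast q.factorial_pos
    apply mul_nonneg (mul_nonneg _ (pow_nonneg hA p)) (pow_nonneg hB q)
    positivity
  -- choose ε and D
  set ε : ℝ := (1 - A - B) / (2 * (A + 1)) with hε
  have hεpos : 0 < ε := by
    apply div_pos (by linarith) (by linarith)
  have hw0 : 0 ≤ (1 + ε) * A + B := by positivity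
  have hw1 : (1 + ε) * A + B < 1 := by
    have h1 : ε * A ≤ ε * (A + 1) := by nlinarith
    have h2 : ε * (A + 1) = (1 - A - B) / 2 := by
      rw [hε]; field_simp
    nlinarith
  obtain ⟨D, hD, hDle⟩ := poch_ratio_bound hm hμ hεpos
  set w : ℝ := (1 + ε) * A + B with hwdef
  set t : ℕ → ℝ := fun n => D * (poch (μ + 1) n / n.factorial * w ^ n) with ht
  have hts : Summable t :=
    (summable_poch_mul_geom (by linarith : (0:ℝ) < μ + 1) hw0 hw1).mul_left D
  -- row bound
  have hrow : ∀ n : ℕ, ∑ pq ∈ Finset.HasAntidiagonal.antidiagonal n, F pq ≤ t n := by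
    intro n
    have hbd : ∀ pq ∈ Finset.HasAntidiagonal.antidiagonal n,
        F pq ≤ D * poch (μ + 1) n * ((1 + ε) * A) ^ pq.1 * B ^ pq.2 /
          (pq.1.factorial * pq.2.factorial) := by
      intro ⟨p, q⟩ hpq
      rw [Finset.HasAntidiagonal.mem_antidiagonal] at hpq
      have h1 := poch_pos (by linarith : (0:ℝ) < μ + 1) (p + q)
      have h4 := poch_pos hμ p
      have h5 := poch_pos (by linarith : (0:ℝ) < 2 - δ) q
      have h6 : (0:ℝ) < p.factorial := by exact_mod_cast p.factorial_pos
      have h7 : (0:ℝ) < q.factorial := by exact_mod_cast q.factorial_pos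
      have heq : F (p, q) = (poch (μ + 1) (p + q) * A ^ p * B ^ q /
          (p.factorial * q.factorial)) *
          ((poch m p / poch μ p) * ((q.factorial : ℝ) / poch (2 - δ) q)) := by
        rw [hF]; simp only [poch_one_eq]
        field_simp
      have hin : (poch m p / poch μ p) * ((q.factorial : ℝ) / poch (2 - δ) q) ≤
          D * (1 + ε) ^ p * 1 := by
        apply mul_le_mul
        · rw [div_le_iff₀ h4]; exact hDle p
        · rw [div_le_one h5]; exact factorial_le_poch (by linarith) q
        · positivity
        · positivity
      have houter : 0 ≤ poch (μ + 1) (p + q) * A ^ p * B ^ q /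
          (p.factorial * q.factorial) := by positivity
      calc F (p, q) ≤ (poch (μ + 1) (p + q) * A ^ p * B ^ q /
              (p.factorial * q.factorial)) * (D * (1 + ε) ^ p * 1) := by
            rw [heq]; exact mul_le_mul_of_nonneg_left hin houter
        _ = D * poch (μ + 1) n * ((1 + ε) * A) ^ p * B ^ q /
              (p.factorial * q.factorial) := by
            rw [hpq, mul_pow]; ring
    calc ∑ pq ∈ Finset.HasAntidiagonal.antidiagonal n, F pq
        ≤ ∑ pq ∈ Finset.HasAntidiagonal.antidiagonal n,
            D * poch (μ + 1) n * ((1 + ε) * A) ^ pq.1 * B ^ pq.2 /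
              (pq.1.factorial * pq.2.factorial) := Finset.sum_le_sum hbd
      _ = t n := by
          rw [Finset.Nat.sum_antidiagonal_eq_sum_range_succ_mk, ht]
          simp only
          rw [hwdef, add_pow, Finset.mul_sum, Finset.mul_sum]
          refine Finset.sum_congr rfl (fun k hk => ?_)
          rw [Finset.mem_range] at hk
          have hkn : k ≤ n := Nat.lt_succ_iff.mp hk
          rw [Nat.cast_choose ℝ hkn]
          have h6 : (0:ℝ) < k.factorial := by exact_mod_cast k.factorial_pos
          have h7 : (0:ℝ) < (n-k).factorial := by exact_mod_cast (n-k).factorial_pos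
          have h8 : (0:ℝ) < n.factorial := by exact_mod_cast n.factorial_pos
          field_simp
  -- now conclude via sigma decomposition
  have hiff := Finset.HasAntidiagonal.sigmaAntidiagonalEquivProd (A := ℕ) |>.summable_iff (f := F)
  rw [← hiff]
  refine (summable_sigma_of_nonneg (f := F ∘ ⇑Finset.HasAntidiagonal.sigmaAntidiagonalEquivProd)
    (fun x => hFnn _)).mpr ⟨fun n => Summable.of_finite, ?_⟩
  · apply Summable.of_nonneg_of_le (fun n => ?_) (fun n => ?_) hts
    · apply tsum_nonneg
      intro y
      exact hFnn _
    · calc ∑' (y : {x // x ∈ Finset.HasAntidiagonal.antidiagonal n}),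
            (F ∘ ⇑Finset.HasAntidiagonal.sigmaAntidiagonalEquivProd) ⟨n, y⟩
          = ∑ pq ∈ Finset.HasAntidiagonal.antidiagonal n, F pq := by
            exact (Finset.tsum_subtype (Finset.HasAntidiagonal.antidiagonal n) F :)
        _ ≤ t n := hrow n

/-- Confluent hypergeometric function `₁F₁(a; b; x) = Σ ((a)_n/(b)_n) xⁿ/n!`. -/
noncomputable def hyp1F1 (a b x : ℝ) : ℝ :=
  ∑' n : ℕ, (poch a n / poch b n) * x ^ n / n.factorial

/-- Appell's hypergeometric function `F₂(α; β, β'; γ, γ'; x, y)`. -/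
noncomputable def appellF2 (a β β' γ' γ'' x y : ℝ) : ℝ :=
  ∑' p : ℕ, ∑' q : ℕ,
    (poch a (p + q) * poch β p * poch β' q /
      (poch γ' p * poch γ'' q * p.factorial * q.factorial)) * x ^ p * y ^ q

/-- Lower incomplete gamma function `γ(s, x) = ∫₀ˣ t^(s-1) e^(-t) dt`. -/
noncomputable def lowerGamma (s x : ℝ) : ℝ :=
  ∫ t in Set.Ioc (0 : ℝ) x, t ^ (s - 1) * Real.exp (-t)

/-- The κ-μ shadowed probability density on `(0, ∞)`, with
`θ₁ = h̄/(μ(1+κ))` and `θ₂ = (μκ+m)h̄/(μ(1+κ)m)`: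
`f(x) = (θ₁^(m−μ)/(θ₂^m Γ(μ))) x^(μ−1) e^(−x/θ₁) ₁F₁(m; μ; ((θ₂−θ₁)/(θ₁θ₂)) x)`. -/
noncomputable def kmuPDF (κ μ m hbar x : ℝ) : ℝ :=
  (hbar / (μ * (1 + κ))) ^ (m - μ) /
      (((μ * κ + m) * hbar / (μ * (1 + κ) * m)) ^ m * Real.Gamma μ) *
    x ^ (μ - 1) * Real.exp (-x / (hbar / (μ * (1 + κ)))) *
    hyp1F1 m μ
      (((((μ * κ + m) * hbar / (μ * (1 + κ) * m)) - hbar / (μ * (1 + κ))) /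
        ((hbar / (μ * (1 + κ))) * ((μ * κ + m) * hbar / (μ * (1 + κ) * m)))) * x)

lemma integrableOn_lgk {s : ℝ} (hs : 0 < s) (x : ℝ) :
    IntegrableOn (fun t : ℝ => t ^ (s - 1) * rexp (-t)) (Ioc 0 x) := by
  have h2 : IntegrableOn (fun t : ℝ => rexp (-t) * t ^ (s - 1)) (Ioc 0 x) :=
    (Real.GammaIntegral_convergent hs).mono_set Ioc_subset_Ioi_self
  exact h2.congr_fun (fun t _ => mul_comm _ _) measurableSet_Ioc

lemma lowerGamma_nonneg {s : ℝ} (x : ℝ) : 0 ≤ lowerGamma s x := by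
  apply setIntegral_nonneg measurableSet_Ioc
  intro t ht
  have : (0:ℝ) ≤ t := ht.1.le
  positivity

lemma lowerGamma_rec {s x : ℝ} (hs : 0 < s) (hx : 0 < x) :
    s * lowerGamma s x = x ^ s * rexp (-x) + lowerGamma (s + 1) x := by
  set F : ℝ → ℝ := fun t => t ^ s * rexp (-t) with hF
  set f' : ℝ → ℝ := fun t => s * (t ^ (s - 1) * rexp (-t)) - t ^ ((s+1) - 1) * rexp (-t) with hf'
  have hderiv : ∀ t ∈ Ioo (0:ℝ) x, HasDerivWithinAt F (f' t) (Ioi t) t := by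
    intro t ht
    have h1 : HasDerivAt (fun u : ℝ => u ^ s) (s * t ^ (s - 1)) t :=
      Real.hasDerivAt_rpow_const (Or.inl ht.1.ne')
    have h2 : HasDerivAt (fun u : ℝ => rexp (-u)) (-rexp (-t)) t := by
      simpa [Function.comp_def] using ((Real.hasDerivAt_exp (-t)).comp t (hasDerivAt_neg t))
    have h3 := h1.mul h2
    have : HasDerivAt F (s * t ^ (s - 1) * rexp (-t) + t ^ s * -rexp (-t)) t := h3
    refine (this.hasDerivWithinAt).congr_deriv ?_
    rw [hf']
    have : (s + 1) - 1 = s := by ring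
    rw [this]; ring
  have hcont : ContinuousOn F (Icc 0 x) := by
    apply ContinuousOn.mul
    · exact (Real.continuous_rpow_const hs.le).continuousOn
    · exact (Real.continuous_exp.comp continuous_neg).continuousOn
  have hint1 : IntegrableOn (fun t : ℝ => t ^ (s - 1) * rexp (-t)) (Ioc 0 x) :=
    integrableOn_lgk hs x
  have hint2 : IntegrableOn (fun t : ℝ => t ^ ((s+1) - 1) * rexp (-t)) (Ioc 0 x) :=
    integrableOn_lgk (by linarith) x
  have hf'int : IntervalIntegrable f' volume 0 x := by
    rw [intervalIntegrable_iff_integrableOn_Ioc_of_le hx.le]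
    exact (hint1.const_mul s).sub hint2
  have key := intervalIntegral.integral_eq_sub_of_hasDeriv_right_of_le hx.le hcont hderiv hf'int
  rw [intervalIntegral.integral_of_le hx.le] at key
  have hF0 : F 0 = 0 := by
    rw [hF]; simp [Real.zero_rpow hs.ne']
  have hFx : F x = x ^ s * rexp (-x) := rfl
  rw [hF0, hFx, sub_zero] at key
  have hsplit : ∫ t in Ioc (0:ℝ) x, f' t =
      s * lowerGamma s x - lowerGamma (s + 1) x := by
    rw [hf']
    rw [MeasureTheory.integral_sub (hint1.const_mul s) hint2,
      MeasureTheory.integral_const_mul]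
    rfl
  rw [hsplit] at key
  linarith [key]

lemma lowerGamma_le {s x : ℝ} (hs : 0 < s) (hx : 0 < x) : lowerGamma s x ≤ x ^ s / s := by
  have hint1 : IntegrableOn (fun t : ℝ => t ^ (s - 1) * rexp (-t)) (Ioc 0 x) :=
    integrableOn_lgk hs x
  have hint2 : IntegrableOn (fun t : ℝ => t ^ (s - 1)) (Ioc 0 x) := by
    rw [← intervalIntegrable_iff_integrableOn_Ioc_of_le hx.le]
    exact intervalIntegral.intervalIntegrable_rpow' (by linarith)
  have hmono : lowerGamma s x ≤ ∫ t in Ioc (0:ℝ) x, t ^ (s - 1) := by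
    apply setIntegral_mono_on hint1 hint2 measurableSet_Ioc
    intro t ht
    have h1 : (0:ℝ) ≤ t ^ (s-1) := rpow_nonneg ht.1.le _
    have h2 : rexp (-t) ≤ 1 := by
      rw [Real.exp_le_one_iff]; linarith [ht.1]
    exact mul_le_of_le_one_right h1 h2
  have hval : ∫ t in Ioc (0:ℝ) x, t ^ (s - 1) = x ^ s / s := by
    rw [← intervalIntegral.integral_of_le hx.le,
      integral_rpow (Or.inl (by linarith : (-1:ℝ) < s - 1))]
    rw [Real.zero_rpow (by linarith : s - 1 + 1 ≠ 0)]
    norm_num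
  linarith [hmono, hval ▸ hmono]

lemma lowerGamma_series {s x : ℝ} (hs : 0 < s) (hx : 0 < x) :
    lowerGamma s x = rexp (-x) * x ^ s * ∑' q : ℕ, x ^ q / poch s (q + 1) := by
  have hpart : ∀ N : ℕ, lowerGamma s x =
      rexp (-x) * x ^ s * (∑ q ∈ Finset.range N, x ^ q / poch s (q + 1)) +
        lowerGamma (s + N) x / poch s N := by
    intro N
    induction N with
    | zero => simp [poch_zero]
    | succ N ih =>
        have hsN : (0:ℝ) < s + N := by positivity
        have hrec := lowerGamma_rec hsN hx
        have hpochN := poch_pos hs N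
        have hpochN1 := poch_pos hs (N + 1)
        have hcast : s + ((N:ℝ) + 1) = (s + N) + 1 := by ring
        have hxsN : x ^ (s + (N:ℝ)) = x ^ s * x ^ N := by
          rw [Real.rpow_add hx, Real.rpow_natCast]
        have hkey : lowerGamma (s + N) x / poch s N =
            rexp (-x) * x ^ s * (x ^ N / poch s (N + 1)) +
              lowerGamma (s + (N + 1 : ℕ)) x / poch s (N + 1) := by
          have h1 : lowerGamma (s + N) x =
              (x ^ (s + (N:ℝ)) * rexp (-(x)) + lowerGamma ((s + N) + 1) x) / (s + N) := by
            field_simp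
            linarith [hrec]
          rw [h1]
          have h2 : s + ((N:ℕ) + 1 : ℕ) = (s + (N:ℝ)) + 1 := by push_cast; ring
          rw [h2, poch_succ]
          rw [hxsN]
          field_simp
        rw [ih, hkey, Finset.sum_range_succ]
        ring
  have hsum := summable_poch_inv hs hx.le
  have hA : Tendsto (fun N => rexp (-x) * x ^ s *
      (∑ q ∈ Finset.range N, x ^ q / poch s (q + 1))) atTop
      (nhds (rexp (-x) * x ^ s * ∑' q : ℕ, x ^ q / poch s (q + 1))) :=
    (hsum.hasSum.tendsto_sum_nat).const_mul _
  have hR : Tendsto (fun N : ℕ => lowerGamma (s + N) x / poch s N) atTop (nhds 0) := by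
    have hub : ∀ N : ℕ, lowerGamma (s + N) x / poch s N ≤ x ^ s * (x ^ N / poch s (N + 1)) := by
      intro N
      have hsN : (0:ℝ) < s + N := by positivity
      have hle := lowerGamma_le hsN hx
      have hp := poch_pos hs N
      have hxsN : x ^ (s + (N:ℝ)) = x ^ s * x ^ N := by
        rw [Real.rpow_add hx, Real.rpow_natCast]
      calc lowerGamma (s + N) x / poch s N ≤ (x ^ (s + (N:ℝ)) / (s + N)) / poch s N := by
            gcongr
        _ = x ^ s * (x ^ N / poch s (N + 1)) := by
            rw [hxsN, poch_succ]
            field_simp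
    have hlb : ∀ N : ℕ, 0 ≤ lowerGamma (s + N) x / poch s N := fun N =>
      div_nonneg (lowerGamma_nonneg x) (poch_pos hs N).le
    have htend : Tendsto (fun N : ℕ => x ^ s * (x ^ N / poch s (N + 1))) atTop (nhds 0) := by
      have := (summable_nat_add_iff 1).mpr hsum |>.tendsto_atTop_zero
      have h2 : Tendsto (fun N : ℕ => x ^ N / poch s (N + 1)) atTop (nhds 0) := by
        exact hsum.tendsto_atTop_zero
      simpa using h2.const_mul (x ^ s)
    exact squeeze_zero hlb hub htend
  have hgoal := hA.add hR
  rw [add_zero] at hgoal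
  have heq : (fun N : ℕ => rexp (-x) * x ^ s *
      (∑ q ∈ Finset.range N, x ^ q / poch s (q + 1)) +
        lowerGamma (s + N) x / poch s N) = fun _ => lowerGamma s x :=
    funext fun N => (hpart N).symm
  rw [heq] at hgoal
  exact tendsto_nhds_unique tendsto_const_nhds hgoal

set_option maxHeartbeats 1000000 in
theorem main_aux (μ m θ1 θ2 : ℝ) (hμ : 0 < μ) (hm : 0 < m) (hθ1 : 0 < θ1) (h12 : θ1 < θ2)
    (δ : ℝ) (hδ0 : 0 < δ) (hδ1 : δ < 1) (z : ℝ) (hz : 0 < z) :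
    (∫ x in Set.Ioi (0 : ℝ), (z * x) ^ δ * lowerGamma (1 - δ) (z * x) *
        (θ1 ^ (m - μ) / (θ2 ^ m * Real.Gamma μ) * x ^ (μ - 1) * Real.exp (-x / θ1) *
          hyp1F1 m μ (((θ2 - θ1) / (θ1 * θ2)) * x)))
      = μ * θ1 * z / (1 - δ) * (θ1 / θ2) ^ m * (1 + θ1 * z) ^ (-(μ + 1)) *
        appellF2 (μ + 1) m 1 μ (2 - δ) ((1 - θ1 / θ2) / (1 + θ1 * z))
          (θ1 * z / (1 + θ1 * z)) := by
  have hθ2 : 0 < θ2 := lt_trans hθ1 h12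
  have h1δ : 0 < 1 - δ := by linarith
  have hΓμ : 0 < Real.Gamma μ := Real.Gamma_pos_of_pos hμ
  set C : ℝ := θ1 ^ (m - μ) / (θ2 ^ m * Real.Gamma μ) with hC
  have hCpos : 0 < C := by
    apply div_pos (rpow_pos_of_pos hθ1 _)
    exact mul_pos (rpow_pos_of_pos hθ2 _) hΓμ
  set c : ℝ := (θ2 - θ1) / (θ1 * θ2) with hc
  have hcpos : 0 < c := div_pos (by linarith) (by positivity)
  set sR : ℝ := 1 / θ1 + z with hsR
  have hsRpos : 0 < sR := by positivity
  have h1z : (0:ℝ) < 1 + θ1 * z := by positivity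
  set T : ℝ := θ1 / (1 + θ1 * z) with hT
  have hTpos : 0 < T := div_pos hθ1 h1z
  have hTs : 1 / sR = T := by
    rw [hsR, hT]; field_simp
  set A : ℝ := (1 - θ1 / θ2) / (1 + θ1 * z) with hA
  set B : ℝ := θ1 * z / (1 + θ1 * z) with hB
  have hAct : A = c * T := by rw [hA, hc, hT]; field_simp
  have hBzt : B = z * T := by rw [hB, hT]; field_simp
  have hA0 : 0 < A := by rw [hAct]; exact mul_pos hcpos hTpos
  have hB0 : 0 < B := by rw [hBzt]; exact mul_pos hz hTpos
  have hAB : A + B < 1 := by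
    rw [hA, hB, ← add_div, div_lt_one h1z]
    have : 0 < θ1 / θ2 := div_pos hθ1 hθ2
    linarith
  -- coefficient function and expanded terms
  set K : ℕ × ℕ → ℝ := fun pq =>
    C * (poch m pq.1 / poch μ pq.1) * c ^ pq.1 / pq.1.factorial *
      (z ^ (pq.2 + 1) / poch (1 - δ) (pq.2 + 1)) with hK
  have hKnn : ∀ pq, 0 ≤ K pq := by
    intro ⟨p, q⟩
    have h1 := poch_pos hm p
    have h2 := poch_pos hμ p
    have h3 := poch_pos h1δ (q + 1)
    have h4 : (0:ℝ) < p.factorial := by exact_mod_cast p.factorial_pos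
    rw [hK]
    positivity
  set g : ℕ × ℕ → ℝ → ℝ := fun pq x =>
    K pq * (x ^ (μ + pq.1 + pq.2) * rexp (-(sR * x))) with hg
  clear_value C c sR T A B K g
  -- pointwise series expansion
  have hptwise : ∀ x ∈ Ioi (0:ℝ),
      (z * x) ^ δ * lowerGamma (1 - δ) (z * x) *
        (C * x ^ (μ - 1) * Real.exp (-x / θ1) * hyp1F1 m μ (c * x)) =
      ∑' pq : ℕ × ℕ, g pq x := by
    intro x hx
    rw [mem_Ioi] at hx
    have hzx : 0 < z * x := mul_pos hz hx
    set a : ℕ → ℝ := fun p => poch m p / poch μ p * (c * x) ^ p / p.factorial with ha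
    set b : ℕ → ℝ := fun q => (z * x) ^ q / poch (1 - δ) (q + 1) with hb
    have hann : ∀ p, 0 ≤ a p := fun p => by
      have h1 := poch_pos hm p
      have h2 := poch_pos hμ p
      have h4 : (0:ℝ) < p.factorial := by exact_mod_cast p.factorial_pos
      rw [ha]
      have : (0:ℝ) ≤ c * x := mul_nonneg hcpos.le hx.le
      positivity
    have hbnn : ∀ q, 0 ≤ b q := fun q => by
      have h3 := poch_pos h1δ (q + 1)
      rw [hb]
      positivity
    have hasum : Summable a := by
      obtain ⟨D, hD, hDle⟩ := poch_ratio_bound hm hμ (one_pos : (0:ℝ) < 1)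
      have hcx : (0:ℝ) ≤ c * x := mul_nonneg hcpos.le hx.le
      refine Summable.of_nonneg_of_le hann (fun p => ?_)
        ((Real.summable_pow_div_factorial (2 * (c * x))).mul_left D)
      have h2 := poch_pos hμ p
      have h4 : (0:ℝ) < p.factorial := by exact_mod_cast p.factorial_pos
      have h5 : poch m p / poch μ p ≤ D * 2 ^ p := by
        rw [div_le_iff₀ h2]
        have := hDle p
        norm_num at this
        linarith
      calc a p = poch m p / poch μ p * ((c * x) ^ p / p.factorial) := by rw [ha]; ring
        _ ≤ D * 2 ^ p * ((c * x) ^ p / p.factorial) := by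
            apply mul_le_mul_of_nonneg_right h5
            positivity
        _ = D * ((2 * (c * x)) ^ p / p.factorial) := by
            rw [mul_pow 2 (c * x) p]; ring
    have hbsum : Summable b := summable_poch_inv h1δ hzx.le
    have habsum : Summable (fun pq : ℕ × ℕ => a pq.1 * b pq.2) :=
      hasum.mul_of_nonneg hbsum hann hbnn
    have hprod := Summable.tsum_mul_tsum hasum hbsum habsum
    rw [lowerGamma_series h1δ hzx]
    have hyprw : hyp1F1 m μ (c * x) = ∑' p, a p := rfl
    rw [hyprw]
    calc (z * x) ^ δ * (rexp (-(z * x)) * (z * x) ^ (1 - δ) * ∑' q, b q) *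
          (C * x ^ (μ - 1) * rexp (-x / θ1) * ∑' p, a p)
        = ((z * x) ^ δ * ((z * x) ^ (1 - δ) * (rexp (-(z * x)) *
            (rexp (-x / θ1) * (C * x ^ (μ - 1)))))) * ((∑' p, a p) * (∑' q, b q)) := by
          ring
      _ = ∑' pq : ℕ × ℕ, ((z * x) ^ δ * ((z * x) ^ (1 - δ) * (rexp (-(z * x)) *
            (rexp (-x / θ1) * (C * x ^ (μ - 1)))))) * (a pq.1 * b pq.2) := by
          rw [hprod, tsum_mul_left]
      _ = ∑' pq : ℕ × ℕ, g pq x := by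
          apply tsum_congr
          intro ⟨p, q⟩
          have h1 : (z * x) ^ (1 - δ) = (z * x) * ((z * x) ^ δ)⁻¹ := by
            rw [show (1 - δ) = 1 + (-δ) by ring, Real.rpow_add hzx, Real.rpow_one,
              Real.rpow_neg hzx.le]
          have h2 : rexp (-(z * x)) * rexp (-x / θ1) = rexp (-(sR * x)) := by
            rw [← Real.exp_add]
            congr 1
            rw [hsR]
            field_simp
            ring
          have h3 : x ^ (μ + (p:ℝ) + q) = x ^ (μ - 1) * (x * (x ^ p * x ^ q)) := by
            rw [show μ + (p:ℝ) + q = (μ - 1) + ((1 + p + q : ℕ) : ℝ) by push_cast; ring,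
              Real.rpow_add hx, Real.rpow_natCast, pow_add, pow_add, pow_one]
            ring
          rw [hg, hK]
          simp only [ha, hb]
          rw [h3, ← h2, h1, mul_pow c x, mul_pow z x]
          have hu : ((z * x) ^ δ) ≠ 0 := (rpow_pos_of_pos hzx δ).ne'
          field_simp
          ring
  -- measurability
  have hmeas : ∀ pq : ℕ × ℕ, AEStronglyMeasurable (g pq) (volume.restrict (Ioi 0)) := by
    intro pq
    rw [hg]
    apply ContinuousOn.aestronglyMeasurable ?_ measurableSet_Ioi
    apply ContinuousOn.mul continuousOn_const
    apply ContinuousOn.mul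
    · intro y hy
      exact (Real.continuousAt_rpow_const y _ (Or.inl (ne_of_gt hy))).continuousWithinAt
    · exact ((Real.continuous_exp.comp (continuous_const.mul continuous_id).neg)).continuousOn
  -- integrability and value of each piece
  have hintc : ∀ (r : ℝ), 0 < r → IntegrableOn
      (fun x : ℝ => x ^ r * rexp (-(sR * x))) (Ioi 0) := by
    intro r hr
    have := integrableOn_rpow_mul_exp_neg_mul_rpow (p := 1) (s := r) (b := sR)
      (by linarith) one_pos hsRpos
    apply this.congr_fun ?_ measurableSet_Ioi
    intro y _
    simp only [Real.rpow_one, neg_mul]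
  have hgint : ∀ pq : ℕ × ℕ, IntegrableOn (g pq) (Ioi 0) := by
    intro pq
    have h0 : (0:ℝ) < μ + pq.1 + pq.2 := by positivity
    rw [hg]
    exact (hintc _ h0).const_mul (K pq)
  have hval : ∀ pq : ℕ × ℕ, ∫ x in Ioi (0:ℝ), g pq x =
      K pq * ((1 / sR) ^ (μ + (pq.1:ℝ) + pq.2 + 1) * Real.Gamma (μ + pq.1 + pq.2 + 1)) := by
    intro pq
    rw [hg]
    simp only
    rw [MeasureTheory.integral_const_mul]
    congr 1
    have h := Real.integral_rpow_mul_exp_neg_mul_Ioi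
      (a := μ + (pq.1:ℝ) + pq.2 + 1) (r := sR) (by positivity) hsRpos
    rw [show μ + (pq.1:ℝ) + pq.2 + 1 - 1 = μ + pq.1 + pq.2 by ring] at h
    rw [h]
  set Pref : ℝ := μ * θ1 * z / (1 - δ) * (θ1 / θ2) ^ m * (1 + θ1 * z) ^ (-(μ + 1)) with hPref
  set F2 : ℕ × ℕ → ℝ := fun pq =>
    poch (μ + 1) (pq.1 + pq.2) * poch m pq.1 * poch 1 pq.2 /
      (poch μ pq.1 * poch (2 - δ) pq.2 * pq.1.factorial * pq.2.factorial) *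
      A ^ pq.1 * B ^ pq.2 with hF2
  clear_value Pref F2
  have hF2nn : ∀ pq, 0 ≤ F2 pq := by
    intro ⟨p, q⟩
    have h1 := poch_pos (show (0:ℝ) < μ + 1 by linarith) (p + q)
    have h2 := poch_pos hm p
    have h3 := poch_pos one_pos q
    have h4 := poch_pos hμ p
    have h5 := poch_pos (show (0:ℝ) < 2 - δ by linarith) q
    have h6 : (0:ℝ) < p.factorial := by exact_mod_cast p.factorial_pos
    have h7 : (0:ℝ) < q.factorial := by exact_mod_cast q.factorial_pos
    rw [hF2]
    apply mul_nonneg (mul_nonneg ?_ (pow_nonneg hA0.le p)) (pow_nonneg hB0.le q)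
    positivity
  have hPrefpos : 0 < Pref := by
    rw [hPref]
    exact mul_pos (mul_pos (div_pos (by positivity) h1δ)
      (rpow_pos_of_pos (div_pos hθ1 hθ2) m)) (rpow_pos_of_pos h1z _)
  have hI : ∀ pq : ℕ × ℕ, ∫ x in Ioi (0:ℝ), g pq x = Pref * F2 pq := by
    intro ⟨p, q⟩
    rw [hval ⟨p, q⟩]
    have hGam : Real.Gamma (μ + (p:ℝ) + q + 1) = poch (μ+1) (p+q) * (μ * Real.Gamma μ) := by
      rw [show μ + (p:ℝ) + q + 1 = (μ + 1) + ((p + q : ℕ) : ℝ) by push_cast; ring,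
        Gamma_poch (by linarith : (0:ℝ) < μ + 1), Real.Gamma_add_one hμ.ne']
    have hTp : (1 / sR) ^ (μ + (p:ℝ) + q + 1) = T ^ (μ+1) * (T ^ p * T ^ q) := by
      rw [hTs, show μ + (p:ℝ) + q + 1 = (μ + 1) + ((p + q : ℕ) : ℝ) by push_cast; ring,
        Real.rpow_add hTpos, Real.rpow_natCast, pow_add]
    have hTmu : T ^ (μ+1) = θ1 ^ (μ+1) * (1 + θ1*z) ^ (-(μ+1)) := by
      rw [hT, Real.div_rpow hθ1.le h1z.le, Real.rpow_neg h1z.le, div_eq_mul_inv]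
    have hθm' : θ1 ^ (m - μ) = θ1 ^ m * θ1 / θ1 ^ (μ + 1) := by
      rw [eq_div_iff (rpow_pos_of_pos hθ1 (μ+1)).ne', ← Real.rpow_add hθ1,
        show m - μ + (μ + 1) = m + 1 by ring, Real.rpow_add hθ1, Real.rpow_one]
    have hdm : (θ1 / θ2) ^ m = θ1 ^ m / θ2 ^ m := Real.div_rpow hθ1.le hθ2.le m
    have hpd : poch (1 - δ) (q + 1) = (1 - δ) * poch (2 - δ) q := by
      rw [poch_succ', show (1 - δ) + 1 = 2 - δ by ring]
    have hp1 : poch 1 q = (q.factorial : ℝ) := poch_one_eq q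
    have hApow : A ^ p = c ^ p * T ^ p := by rw [hAct, mul_pow]
    have hBpow : B ^ q = z ^ q * T ^ q := by rw [hBzt, mul_pow]
    rw [hK, hPref, hF2]
    simp only
    rw [hGam, hTp, hTmu, hdm, hpd, hp1, hApow, hBpow, hC, hθm']
    have e2 := (poch_pos hμ p).ne'
    have e5 := (poch_pos (show (0:ℝ) < 2 - δ by linarith) q).ne'
    have e4 : (p.factorial:ℝ) ≠ 0 := by
      exact_mod_cast p.factorial_pos.ne'
    have e7 : (q.factorial:ℝ) ≠ 0 := by
      exact_mod_cast q.factorial_pos.ne'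
    have e8 : Real.Gamma μ ≠ 0 := hΓμ.ne'
    have e9 : θ2 ^ m ≠ 0 := (rpow_pos_of_pos hθ2 m).ne'
    have e10 : θ1 ^ (μ+1) ≠ 0 := (rpow_pos_of_pos hθ1 (μ+1)).ne'
    have e11 : (1 - δ) ≠ 0 := h1δ.ne'
    field_simp
    ring
  have hF2sum : Summable F2 := by
    rw [hF2]
    exact summable_F2coeff hμ hm hδ1 hA0.le hB0.le hAB
  have hgnn : ∀ pq, 0 ≤ᵐ[volume.restrict (Ioi (0:ℝ))] g pq := by
    intro pq
    filter_upwards [ae_restrict_mem measurableSet_Ioi] with x hx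
    rw [hg]
    exact mul_nonneg (hKnn pq)
      (mul_nonneg (rpow_nonneg (le_of_lt hx) _) (exp_pos _).le)
  have hlint : ∀ pq : ℕ × ℕ, ∫⁻ x in Ioi (0:ℝ), ‖g pq x‖₊ = ENNReal.ofReal (Pref * F2 pq) := by
    intro pq
    rw [← hI pq, ofReal_integral_eq_lintegral_ofReal (hgint pq) (hgnn pq)]
    apply lintegral_congr_ae
    filter_upwards [hgnn pq] with x hx
    exact Real.enorm_eq_ofReal hx
  have hIsum : Summable (fun pq : ℕ × ℕ => Pref * F2 pq) := hF2sum.mul_left Pref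
  have hInn : ∀ pq : ℕ × ℕ, 0 ≤ Pref * F2 pq := fun pq =>
    mul_nonneg hPrefpos.le (hF2nn pq)
  have hfin : (∑' pq : ℕ × ℕ, ∫⁻ x in Ioi (0:ℝ), ‖g pq x‖₊) ≠ ⊤ := by
    rw [tsum_congr hlint, ← ENNReal.ofReal_tsum_of_nonneg hInn hIsum]
    exact ENNReal.ofReal_ne_top
  calc (∫ x in Ioi (0:ℝ), (z * x) ^ δ * lowerGamma (1 - δ) (z * x) *
        (C * x ^ (μ - 1) * Real.exp (-x / θ1) * hyp1F1 m μ (c * x)))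
      = ∫ x in Ioi (0:ℝ), ∑' pq : ℕ × ℕ, g pq x :=
        setIntegral_congr_fun measurableSet_Ioi hptwise
    _ = ∑' pq : ℕ × ℕ, ∫ x in Ioi (0:ℝ), g pq x := integral_tsum hmeas hfin
    _ = ∑' pq : ℕ × ℕ, Pref * F2 pq := tsum_congr hI
    _ = Pref * ∑' pq : ℕ × ℕ, F2 pq := tsum_mul_left
    _ = Pref * appellF2 (μ + 1) m 1 μ (2 - δ) A B := by
        rw [Summable.tsum_prod hF2sum]
        simp only [hF2]
        rfl

/-- Lemma 2 (Appell evaluation):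
`∫₀^∞ (zx)^δ γ(1−δ, zx) f(x) dx
  = (μθ₁z/(1−δ)) (θ₁/θ₂)^m (1+θ₁z)^(−(μ+1)) F₂(μ+1; m, 1; μ, 2−δ; A, B)`. -/
theorem kmu_appell_eval (κ μ m hbar : ℝ) (hκ : 0 < κ) (hμ : 0 < μ) (hm : 0 < m)
    (hhbar : 0 < hbar) (δ : ℝ) (hδ0 : 0 < δ) (hδ1 : δ < 1)
    (θ1 θ2 : ℝ) (hθ1 : θ1 = hbar / (μ * (1 + κ)))
    (hθ2 : θ2 = (μ * κ + m) * hbar / (μ * (1 + κ) * m))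
    (z : ℝ) (hz : 0 < z)
    (A B : ℝ) (hA : A = (1 - θ1 / θ2) / (1 + θ1 * z)) (hB : B = θ1 * z / (1 + θ1 * z)) :
    (∫ x in Set.Ioi (0 : ℝ), (z * x) ^ δ * lowerGamma (1 - δ) (z * x) * kmuPDF κ μ m hbar x)
      = μ * θ1 * z / (1 - δ) * (θ1 / θ2) ^ m * (1 + θ1 * z) ^ (-(μ + 1)) *
        appellF2 (μ + 1) m 1 μ (2 - δ) A B := by
  subst hθ1 hθ2 hA hB
  have hμκ : (0:ℝ) < μ * (1 + κ) := by positivity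
  have hθ1pos : (0:ℝ) < hbar / (μ * (1 + κ)) := by positivity
  have h12 : hbar / (μ * (1 + κ)) < (μ * κ + m) * hbar / (μ * (1 + κ) * m) := by
    rw [div_lt_div_iff₀ (by positivity) (by positivity)]
    nlinarith [mul_pos (mul_pos hhbar hμκ) (mul_pos hμ hκ)]
  simp only [kmuPDF]
  exact main_aux μ m _ _ hμ hm hθ1pos h12 δ hδ0 hδ1 z hz
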